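/- Let $H$ be a subgroup of a group $G$, let $J$ be a nonempty set with chosen basepoint $0 \in J$, and consider the cochain complexes $\ell^\infty(H^{*+1},\mathbb{R})^H$ and $\ell^\infty((J\times H)^{*+1},\mathbb{R})^H$ with simplicial coboundary operators, where $H$ acts on $J \times H$ by translation on the second factor. Then the maps $\varphi^*(f)((i_0,h_0),\dots,(i_k,h_k)) = f(h_0,\dots,h_k)$ and $\psi^*(f)(h_0,\dots,h_k) = f((0,h_0),\dots,(0,h_k))$ are mutually homotopy inverse cochain maps of norm $1$ in each degree; moreover $\psi^* \circ \varphi^* = \mathrm{id}$, and there is an explicit cochain homotopy between $\varphi^* \circ \psi^*$ and the identity whose norm in degree $k$ is at most $k$. -/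

import Mathlib

open scoped BigOperators

/-- Simplicial coboundary on homogeneous cochains on a set `S`. -/
noncomputable def scob {S : Type*} (k : ℕ) (f : (Fin (k + 1) → S) → ℝ) :
    (Fin (k + 2) → S) → ℝ :=
  fun x => ∑ j : Fin (k + 2), (-1 : ℝ) ^ (j : ℕ) * f (x ∘ j.succAbove)

/-- Boundedness of a real-valued function. -/
def Bdd {X : Type*} (f : X → ℝ) : Prop := ∃ C, ∀ x, |f x| ≤ C

/-- Supremum (semi)norm of a real-valued function. -/
noncomputable def supNorm {X : Type*} (f : X → ℝ) : ℝ := ⨆ x, |f x|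

/-- `H`-invariance of a cochain on `H`-tuples (diagonal left translation). -/
def InvH (H : Type*) [Group H] {k : ℕ} (f : (Fin (k + 1) → H) → ℝ) : Prop :=
  ∀ (h : H) x, f (fun i => h * x i) = f x

/-- `H`-invariance of a cochain on `(J × H)`-tuples, where `H` acts by translation on the
second factor. -/
def InvJH (J H : Type*) [Group H] {k : ℕ} (f : (Fin (k + 1) → J × H) → ℝ) : Prop :=
  ∀ (h : H) x, f (fun i => ((x i).1, h * (x i).2)) = f x

/-- The cochain map `φ^* : ℓ^∞(H^{*+1}) → ℓ^∞((J × H)^{*+1})`,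
`φ^*(f)((i_0,h_0),…,(i_k,h_k)) = f(h_0,…,h_k)`. -/
def phiMap (J H : Type*) (k : ℕ) (f : (Fin (k + 1) → H) → ℝ) :
    (Fin (k + 1) → J × H) → ℝ :=
  fun x => f fun m => (x m).2

/-- The cochain map `ψ^* : ℓ^∞((J × H)^{*+1}) → ℓ^∞(H^{*+1})`,
`ψ^*(f)(h_0,…,h_k) = f((0,h_0),…,(0,h_k))`, for a basepoint `0 = j₀ ∈ J`. -/
def psiMap {J : Type*} (H : Type*) (j₀ : J) (k : ℕ) (f : (Fin (k + 1) → J × H) → ℝ) :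
    (Fin (k + 1) → H) → ℝ :=
  fun x => f fun m => (j₀, x m)

/-- The explicit cochain homotopy (in the indexing below, `hty k` lowers functions on
`(k+2)`-tuples to functions on `(k+1)`-tuples):
`(hty f)((i_0,h_0),…,(i_k,h_k)) =
  ∑_{j=0}^{k} (-1)^j f((i_0,h_0),…,(i_j,h_j),(0,h_j),…,(0,h_k))`. -/
noncomputable def hty {J H : Type*} (j₀ : J) (k : ℕ)
    (f : (Fin (k + 2) → J × H) → ℝ) : (Fin (k + 1) → J × H) → ℝ :=
  fun x => ∑ j : Fin (k + 1), (-1 : ℝ) ^ (j : ℕ) *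
    f (fun m : Fin (k + 2) =>
      if h : (m : ℕ) ≤ (j : ℕ) then x ⟨m, by have := j.isLt; omega⟩
      else (j₀, (x ⟨(m : ℕ) - 1, by have := m.isLt; omega⟩).2))

lemma succAbove_coe {n : ℕ} (p : Fin (n+1)) (m : Fin n) :
    ((p.succAbove m : Fin (n+1)) : ℕ) = if (m:ℕ) < (p:ℕ) then (m:ℕ) else (m:ℕ)+1 := by
  rw [Fin.succAbove]
  split_ifs with h1 h2 h2 <;> simp_all [Fin.lt_def]

open Finset in
lemma pureHomotopy (k : ℕ) (g : ℕ → ℕ → ℝ)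
    (hg : ∀ j, g (j+1) j = g (j+1) (j+1)) :
    (∑ i ∈ range (k+2), ∑ j ∈ range (k+1),
        (-1:ℝ)^(i+j) * (if i ≤ j then g i (j+1) else g (i+1) j))
      + ∑ j ∈ range (k+2), ∑ i ∈ range (k+3), (-1:ℝ)^(i+j) * g i j
    = g 0 0 - g (k+2) (k+2) := by
  set T : ℕ → ℕ → ℝ := fun i j => (-1:ℝ)^(i+j) * (if i ≤ j then g i (j+1) else g (i+1) j) with hT
  set U : ℕ → ℕ → ℝ := fun i j => (-1:ℝ)^(i+j) * g i j with hU
  induction k with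
  | zero =>
      simp only [Finset.sum_range_succ, Finset.sum_range_zero, hT, hU]
      norm_num
      rw [hg 0, hg 1]
      ring
  | succ k ih =>
      have h1 : (∑ i ∈ range (k+1+2), ∑ j ∈ range (k+1+1), T i j)
          = ((∑ i ∈ range (k+2), ∑ j ∈ range (k+1), T i j)
            + (∑ i ∈ range (k+2), T i (k+1))) + (∑ j ∈ range (k+2), T (k+2) j) := by
        rw [show k+1+2 = (k+2)+1 from rfl, Finset.sum_range_succ]
        congr 1
        rw [← Finset.sum_add_distrib]
        exact Finset.sum_congr rfl fun i _ => Finset.sum_range_succ _ _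
      have h2 : (∑ j ∈ range (k+1+2), ∑ i ∈ range (k+1+3), U i j)
          = ((∑ j ∈ range (k+2), ∑ i ∈ range (k+3), U i j)
            + (∑ j ∈ range (k+2), U (k+3) j)) + (∑ i ∈ range (k+4), U i (k+2)) := by
        rw [show k+1+2 = (k+2)+1 from rfl, Finset.sum_range_succ]
        congr 1
        rw [← Finset.sum_add_distrib]
        exact Finset.sum_congr rfl fun j _ => Finset.sum_range_succ _ _
      have hc1 : (∑ j ∈ range (k+2), T (k+2) j) + (∑ j ∈ range (k+2), U (k+3) j) = 0 := by
        rw [← Finset.sum_add_distrib]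
        apply Finset.sum_eq_zero
        intro j hj
        simp only [Finset.mem_range] at hj
        simp only [hT, hU]
        rw [if_neg (by omega)]
        rw [show k+3+j = (k+2+j)+1 from by ring, pow_succ]
        ring
      have hc2 : (∑ i ∈ range (k+4), U i (k+2))
          = -(∑ i ∈ range (k+2), T i (k+1)) + g (k+2) (k+2) - g (k+3) (k+2) := by
        rw [show k+4 = (k+3)+1 from rfl, Finset.sum_range_succ,
          show k+3 = (k+2)+1 from rfl, Finset.sum_range_succ]
        have e1 : (∑ i ∈ range (k+2), U i (k+2)) = -(∑ i ∈ range (k+2), T i (k+1)) := by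
          rw [← Finset.sum_neg_distrib]
          apply Finset.sum_congr rfl
          intro i hi
          simp only [Finset.mem_range] at hi
          simp only [hT, hU]
          rw [if_pos (by omega)]
          rw [show i+(k+2) = (i+(k+1))+1 from by ring, pow_succ]
          ring
        have e2 : ((-1:ℝ))^(k+2+(k+2)) = 1 := by
          rw [show k+2+(k+2) = 2*(k+2) from by ring, pow_mul]; norm_num
        have e3 : ((-1:ℝ))^(k+3+(k+2)) = -1 := by
          rw [show k+3+(k+2) = 2*(k+2)+1 from by ring, pow_succ, pow_mul]; norm_num
        rw [e1]; simp only [hU, e2, e3]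
        ring
      rw [h1, h2]
      rw [hg (k+2)] at hc2
      have : g (k+1+2) (k+1+2) = g (k+3) (k+3) := rfl
      rw [this]
      linarith [ih]

lemma xeq {n : ℕ} {α : Sort*} (x : Fin n → α) {a b : ℕ} {ha : a < n} {hb : b < n}
    (hab : a = b) : x ⟨a, ha⟩ = x ⟨b, hb⟩ := by subst hab; rfl

lemma pairEq {n : ℕ} {α β : Type*} (x : Fin n → α × β) (j₀ : α) {a b : ℕ}
    {ha : a < n} {hb : b < n} (hab : a = b) :
    ((j₀, (x ⟨a, ha⟩).2) : α × β) = (j₀, (x ⟨b, hb⟩).2) := by subst hab; rfl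

open Finset in
lemma keyHomotopy {J H : Type*} (j₀ : J) (k : ℕ) (f : (Fin (k+2) → J × H) → ℝ)
    (x : Fin (k+2) → J × H) :
    phiMap J H (k+1) (psiMap H j₀ (k+1) f) x - f x
      = scob k (hty j₀ k f) x + hty j₀ (k+1) (scob (k+1) f) x := by
  have hmin : ∀ t : ℕ, min t (k+1) < k + 2 := by omega
  set X : ℕ → J × H := fun t => x ⟨min t (k+1), hmin t⟩ with hX
  set D : ℕ → ℕ → (Fin (k+2) → J × H) := fun a b m =>
    if (if (m:ℕ) < a then (m:ℕ) else (m:ℕ)+1) ≤ b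
    then X (if (m:ℕ) < a then (m:ℕ) else (m:ℕ)+1)
    else (j₀, (X ((if (m:ℕ) < a then (m:ℕ) else (m:ℕ)+1) - 1)).2) with hD
  set g : ℕ → ℕ → ℝ := fun a b => f (D a b) with hg'
  have hcomp : ∀ (i : Fin (k+2)) (t : ℕ) (ht : t < k+1),
      x (i.succAbove ⟨t, ht⟩) = X (if t < (i:ℕ) then t else t+1) := by
    intro i t ht
    simp only [hX]
    refine congrArg x (Fin.ext ?_)
    rw [succAbove_coe]
    simp only [Fin.val_mk]
    have := i.isLt
    split_ifs <;> omega
  have hg : ∀ j, g (j+1) j = g (j+1) (j+1) := by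
    intro j
    refine congrArg f (funext fun m => ?_)
    by_cases cm : (m:ℕ) < j+1
    · simp only [hD, cm, if_true, show (m:ℕ) ≤ j from by omega,
        show (m:ℕ) ≤ j+1 from by omega]
    · simp only [hD, cm, if_false, show ¬((m:ℕ)+1 ≤ j) from by omega,
        show ¬((m:ℕ)+1 ≤ j+1) from by omega]
  have hS2 : scob k (hty j₀ k f) x
      = ∑ i ∈ range (k+2), ∑ j ∈ range (k+1),
          (-1:ℝ)^(i+j) * (if i ≤ j then g i (j+1) else g (i+1) j) := by
    rw [scob, ← Fin.sum_univ_eq_sum_range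
      (fun i => ∑ j ∈ range (k+1), (-1:ℝ)^(i+j) * (if i ≤ j then g i (j+1) else g (i+1) j))]
    apply Finset.sum_congr rfl
    intro i _
    rw [hty, Finset.mul_sum, ← Fin.sum_univ_eq_sum_range
      (fun j => (-1:ℝ)^((i:ℕ)+j) * (if (i:ℕ) ≤ j then g (i:ℕ) (j+1) else g ((i:ℕ)+1) j))]
    apply Finset.sum_congr rfl
    intro j _
    rw [pow_add, ← mul_assoc]
    by_cases hij : (i:ℕ) ≤ (j:ℕ)
    · rw [if_pos hij]
      refine congrArg _ (congrArg f (funext fun m => ?_))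
      have hm := m.isLt
      have hjlt := j.isLt
      by_cases c1 : (m:ℕ) ≤ (j:ℕ)
      · rw [dif_pos c1]
        by_cases c2 : (m:ℕ) < (i:ℕ)
        · simp only [Function.comp_apply, hcomp, hD, c2, if_true,
            show (m:ℕ) ≤ (j:ℕ)+1 from by omega]
          all_goals (first | rfl | (refine xeq x ?_; omega) | (refine pairEq x j₀ ?_; omega) | (refine congrArg x (Fin.ext ?_); (try simp only [Fin.val_mk]); omega) | (refine congrArg (fun p => (j₀, p.2)) (congrArg x (Fin.ext ?_)); (try simp only [Fin.val_mk]); omega))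
        · simp only [Function.comp_apply, hcomp, hD, c2, if_false,
            show (m:ℕ)+1 ≤ (j:ℕ)+1 from by omega, if_true]
          all_goals (first | rfl | (refine xeq x ?_; omega) | (refine pairEq x j₀ ?_; omega) | (refine congrArg x (Fin.ext ?_); (try simp only [Fin.val_mk]); omega) | (refine congrArg (fun p => (j₀, p.2)) (congrArg x (Fin.ext ?_)); (try simp only [Fin.val_mk]); omega))
      · rw [dif_neg c1]
        simp only [Function.comp_apply, hcomp, hD,
          show ¬((m:ℕ)-1 < (i:ℕ)) from by omega, show ¬((m:ℕ) < (i:ℕ)) from by omega,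
          if_false, show ¬((m:ℕ)+1 ≤ (j:ℕ)+1) from by omega,
          Nat.add_sub_cancel, show (m:ℕ)-1+1 = (m:ℕ) from by omega]
        all_goals (first | rfl | (refine xeq x ?_; omega) | (refine pairEq x j₀ ?_; omega) | (refine congrArg x (Fin.ext ?_); (try simp only [Fin.val_mk]); omega) | (refine congrArg (fun p => (j₀, p.2)) (congrArg x (Fin.ext ?_)); (try simp only [Fin.val_mk]); omega))
    · rw [if_neg hij]
      refine congrArg _ (congrArg f (funext fun m => ?_))
      have hm := m.isLt
      have hjlt := j.isLt
      by_cases c1 : (m:ℕ) ≤ (j:ℕ)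
      · rw [dif_pos c1]
        simp only [Function.comp_apply, hcomp, hD,
          show (m:ℕ) < (i:ℕ) from by omega, show (m:ℕ) < (i:ℕ)+1 from by omega,
          if_true, c1]
        all_goals (first | rfl | (refine xeq x ?_; omega) | (refine pairEq x j₀ ?_; omega) | (refine congrArg x (Fin.ext ?_); (try simp only [Fin.val_mk]); omega) | (refine congrArg (fun p => (j₀, p.2)) (congrArg x (Fin.ext ?_)); (try simp only [Fin.val_mk]); omega))
      · rw [dif_neg c1]
        by_cases c2 : (m:ℕ) < (i:ℕ)+1
        · simp only [Function.comp_apply, hcomp, hD,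
            show (m:ℕ)-1 < (i:ℕ) from by omega, c2, if_true, c1, if_false]
          all_goals (first | rfl | (refine xeq x ?_; omega) | (refine pairEq x j₀ ?_; omega) | (refine congrArg x (Fin.ext ?_); (try simp only [Fin.val_mk]); omega) | (refine congrArg (fun p => (j₀, p.2)) (congrArg x (Fin.ext ?_)); (try simp only [Fin.val_mk]); omega))
        · simp only [Function.comp_apply, hcomp, hD,
            show ¬((m:ℕ)-1 < (i:ℕ)) from by omega, c2, if_false,
            show ¬((m:ℕ)+1 ≤ (j:ℕ)) from by omega,
            Nat.add_sub_cancel, show (m:ℕ)-1+1 = (m:ℕ) from by omega]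
          all_goals (first | rfl | (refine xeq x ?_; omega) | (refine pairEq x j₀ ?_; omega) | (refine congrArg x (Fin.ext ?_); (try simp only [Fin.val_mk]); omega) | (refine congrArg (fun p => (j₀, p.2)) (congrArg x (Fin.ext ?_)); (try simp only [Fin.val_mk]); omega))
  have hS3 : hty j₀ (k+1) (scob (k+1) f) x
      = ∑ j ∈ range (k+2), ∑ i ∈ range (k+3), (-1:ℝ)^(i+j) * g i j := by
    rw [hty, ← Fin.sum_univ_eq_sum_range
      (fun j => ∑ i ∈ range (k+3), (-1:ℝ)^(i+j) * g i j)]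
    apply Finset.sum_congr rfl
    intro j _
    rw [scob, Finset.mul_sum, ← Fin.sum_univ_eq_sum_range
      (fun i => (-1:ℝ)^(i+(j:ℕ)) * g i (j:ℕ))]
    apply Finset.sum_congr rfl
    intro i _
    rw [pow_add, ← mul_assoc, mul_comm ((-1:ℝ)^(j:ℕ)) ((-1:ℝ)^(i:ℕ))]
    refine congrArg _ (congrArg f (funext fun m => ?_))
    have hm := m.isLt
    have hjlt := j.isLt
    have hsa := succAbove_coe i m
    simp only [Function.comp_apply]
    by_cases c2 : (m:ℕ) < (i:ℕ)
    · have hsa' : ((i.succAbove m : Fin (k+3)) : ℕ) = (m:ℕ) := by rw [hsa, if_pos c2]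
      by_cases c1 : (m:ℕ) ≤ (j:ℕ)
      · rw [dif_pos (show ((i.succAbove m : Fin (k+3)) : ℕ) ≤ (j:ℕ) from by omega)]
        simp only [hD, c2, if_true, c1, hX, hsa']
        all_goals (first | rfl | (refine xeq x ?_; omega) | (refine pairEq x j₀ ?_; omega) | (refine congrArg x (Fin.ext ?_); (try simp only [Fin.val_mk]); omega) | (refine congrArg (fun p => (j₀, p.2)) (congrArg x (Fin.ext ?_)); (try simp only [Fin.val_mk]); omega))
      · rw [dif_neg (show ¬(((i.succAbove m : Fin (k+3)) : ℕ) ≤ (j:ℕ)) from by omega)]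
        simp only [hD, c2, if_true, c1, if_false, hX, hsa']
        all_goals (first | rfl | (refine xeq x ?_; omega) | (refine pairEq x j₀ ?_; omega) | (refine congrArg x (Fin.ext ?_); (try simp only [Fin.val_mk]); omega) | (refine congrArg (fun p => (j₀, p.2)) (congrArg x (Fin.ext ?_)); (try simp only [Fin.val_mk]); omega))
    · have hsa' : ((i.succAbove m : Fin (k+3)) : ℕ) = (m:ℕ)+1 := by rw [hsa, if_neg c2]
      by_cases c1 : (m:ℕ)+1 ≤ (j:ℕ)
      · rw [dif_pos (show ((i.succAbove m : Fin (k+3)) : ℕ) ≤ (j:ℕ) from by omega)]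
        simp only [hD, c2, if_false, c1, if_true, hX, hsa']
        all_goals (first | rfl | (refine xeq x ?_; omega) | (refine pairEq x j₀ ?_; omega) | (refine congrArg x (Fin.ext ?_); (try simp only [Fin.val_mk]); omega) | (refine congrArg (fun p => (j₀, p.2)) (congrArg x (Fin.ext ?_)); (try simp only [Fin.val_mk]); omega))
      · rw [dif_neg (show ¬(((i.succAbove m : Fin (k+3)) : ℕ) ≤ (j:ℕ)) from by omega)]
        simp only [hD, c2, if_false, c1, hX, hsa', Nat.add_sub_cancel]
        all_goals (first | rfl | (refine xeq x ?_; omega) | (refine pairEq x j₀ ?_; omega) | (refine congrArg x (Fin.ext ?_); (try simp only [Fin.val_mk]); omega) | (refine congrArg (fun p => (j₀, p.2)) (congrArg x (Fin.ext ?_)); (try simp only [Fin.val_mk]); omega))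
  have h00 : phiMap J H (k+1) (psiMap H j₀ (k+1) f) x = g 0 0 := by
    refine congrArg f (funext fun m => ?_)
    have hm := m.isLt
    simp only [phiMap, psiMap, hD, show ¬((m:ℕ) < 0) from by omega, if_false,
      show ¬((m:ℕ)+1 ≤ 0) from by omega, hX, Nat.add_sub_cancel]
    all_goals (first | rfl | (refine xeq x ?_; omega) | (refine pairEq x j₀ ?_; omega) | (refine congrArg x (Fin.ext ?_); (try simp only [Fin.val_mk]); omega) | (refine congrArg (fun p => (j₀, p.2)) (congrArg x (Fin.ext ?_)); (try simp only [Fin.val_mk]); omega))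
  have hxx : f x = g (k+2) (k+2) := by
    refine congrArg f (funext fun m => ?_)
    have hm := m.isLt
    simp only [hD, show (m:ℕ) < k+2 from hm, if_true,
      show (m:ℕ) ≤ k+2 from by omega, hX]
    all_goals (first | rfl | (refine xeq x ?_; omega) | (refine pairEq x j₀ ?_; omega) | (refine congrArg x (Fin.ext ?_); (try simp only [Fin.val_mk]); omega) | (refine congrArg (fun p => (j₀, p.2)) (congrArg x (Fin.ext ?_)); (try simp only [Fin.val_mk]); omega))
  rw [hS2, hS3, h00, hxx, pureHomotopy k g hg]

lemma bddSup {X : Type*} (f : X → ℝ) (h : Bdd f) :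
    BddAbove (Set.range fun x => |f x|) := by
  obtain ⟨C, hC⟩ := h
  exact ⟨C, by rintro v ⟨y, rfl⟩; exact hC y⟩

/-- **The explicit homotopy equivalence in the boundedly controlled Shapiro lemma.**
Let `H ≤ G` be groups, `J` a nonempty set with basepoint `j₀` (so that `G ≅ J × H` as an
`H`-set).  The maps `φ^*` and `ψ^*` between `ℓ^∞(H^{*+1},ℝ)^H` and `ℓ^∞((J×H)^{*+1},ℝ)^H` are
mutually homotopy inverse cochain maps of norm `1` in each degree; moreover
`ψ^* ∘ φ^* = id`, and the explicit cochain homotopy `hty` between `φ^* ∘ ψ^*` and the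
identity has norm at most `k` in degree `k`. -/
theorem stmt9 (G : Type*) [Group G] (H : Subgroup G) (J : Type*) (j₀ : J) :
    -- φ^* and ψ^* are cochain maps
    (∀ (k : ℕ) (f : (Fin (k + 1) → ↥H) → ℝ),
        scob k (phiMap J ↥H k f) = phiMap J ↥H (k + 1) (scob k f)) ∧
    (∀ (k : ℕ) (f : (Fin (k + 1) → J × ↥H) → ℝ),
        scob k (psiMap ↥H j₀ k f) = psiMap ↥H j₀ (k + 1) (scob k f)) ∧
    -- they preserve invariance and boundedness
    (∀ (k : ℕ) (f : (Fin (k + 1) → ↥H) → ℝ), InvH ↥H f → InvJH J ↥H (phiMap J ↥H k f)) ∧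
    (∀ (k : ℕ) (f : (Fin (k + 1) → J × ↥H) → ℝ), InvJH J ↥H f → InvH ↥H (psiMap ↥H j₀ k f)) ∧
    (∀ (k : ℕ) (f : (Fin (k + 1) → ↥H) → ℝ), Bdd f → Bdd (phiMap J ↥H k f)) ∧
    (∀ (k : ℕ) (f : (Fin (k + 1) → J × ↥H) → ℝ), Bdd f → Bdd (psiMap ↥H j₀ k f)) ∧
    -- both have norm 1 in each degree (φ^* is even isometric, ψ^* is norm-nonincreasing)
    (∀ (k : ℕ) (f : (Fin (k + 1) → ↥H) → ℝ), Bdd f → supNorm (phiMap J ↥H k f) = supNorm f) ∧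
    (∀ (k : ℕ) (f : (Fin (k + 1) → J × ↥H) → ℝ), Bdd f →
        supNorm (psiMap ↥H j₀ k f) ≤ supNorm f) ∧
    -- ψ^* ∘ φ^* = id
    (∀ (k : ℕ) (f : (Fin (k + 1) → ↥H) → ℝ), psiMap ↥H j₀ k (phiMap J ↥H k f) = f) ∧
    -- hty is a cochain homotopy between φ^* ∘ ψ^* and the identity
    (∀ (f : (Fin 1 → J × ↥H) → ℝ),
        phiMap J ↥H 0 (psiMap ↥H j₀ 0 f) - f = hty j₀ 0 (scob 0 f)) ∧
    (∀ (k : ℕ) (f : (Fin (k + 2) → J × ↥H) → ℝ),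
        phiMap J ↥H (k + 1) (psiMap ↥H j₀ (k + 1) f) - f =
          scob k (hty j₀ k f) + hty j₀ (k + 1) (scob (k + 1) f)) ∧
    -- the homotopy has norm ≤ k in degree k (here: `hty j₀ k` acts on degree `k+1`)
    (∀ (k : ℕ) (f : (Fin (k + 2) → J × ↥H) → ℝ), Bdd f →
        supNorm (hty j₀ k f) ≤ (k + 1) * supNorm f) := by
  haveI : Nonempty J := ⟨j₀⟩
  refine ⟨?_, ?_, ?_, ?_, ?_, ?_, ?_, ?_, ?_, ?_, ?_, ?_⟩
  · intro k f; rfl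
  · intro k f; rfl
  · intro k f hf h y; exact hf h _
  · intro k f hf h y; exact hf h fun m => (j₀, y m)
  · rintro k f ⟨C, hC⟩; exact ⟨C, fun y => hC _⟩
  · rintro k f ⟨C, hC⟩; exact ⟨C, fun y => hC _⟩
  · intro k f hB
    have hB' : Bdd (phiMap J ↥H k f) := by
      obtain ⟨C, hC⟩ := hB; exact ⟨C, fun y => hC _⟩
    have hr1 := bddSup f hB
    have hr2 := bddSup _ hB'
    simp only [supNorm]
    apply le_antisymm
    · refine ciSup_le fun y => ?_
      show |f (fun m => (y m).2)| ≤ ⨆ x, |f x|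
      exact le_ciSup hr1 _
    · refine ciSup_le fun y => ?_
      show |phiMap J ↥H k f (fun m => (j₀, y m))| ≤ ⨆ x, |phiMap J ↥H k f x|
      exact le_ciSup hr2 _
  · intro k f hB
    have hr1 := bddSup f hB
    simp only [supNorm]
    refine ciSup_le fun y => ?_
    show |f (fun m => (j₀, y m))| ≤ ⨆ x, |f x|
    exact le_ciSup hr1 _
  · intro k f; rfl
  · intro f
    funext x
    simp only [Pi.sub_apply, phiMap, psiMap, hty, scob]
    rw [Fin.sum_univ_one, Fin.sum_univ_two]
    simp only [Fin.val_zero, Fin.val_one, pow_zero, pow_one, one_mul, neg_one_mul,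
      sub_eq_add_neg]
    congr 1 <;> (try refine neg_inj.mpr ?_) <;>
        refine congrArg f (funext fun m => ?_) <;>
        (have hm0 : m = 0 := by apply Fin.ext; have := m.isLt; omega) <;>
        subst hm0 <;>
        simp [Fin.succAbove, Fin.lt_def]
  · intro k f
    funext x
    simp only [Pi.sub_apply, Pi.add_apply]
    exact keyHomotopy j₀ k f x
  · intro k f hB
    have hr1 := bddSup f hB
    rw [show supNorm (hty j₀ k f) = ⨆ x, |hty j₀ k f x| from rfl]
    apply ciSup_le
    intro y
    rw [hty]
    calc |∑ j : Fin (k+1), (-1:ℝ)^(j:ℕ) * f (fun m : Fin (k + 2) =>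
          if h : (m : ℕ) ≤ (j : ℕ) then y ⟨m, by have := j.isLt; omega⟩
          else (j₀, (y ⟨(m : ℕ) - 1, by have := m.isLt; omega⟩).2))|
        ≤ ∑ j : Fin (k+1), |(-1:ℝ)^(j:ℕ) * f (fun m : Fin (k + 2) =>
          if h : (m : ℕ) ≤ (j : ℕ) then y ⟨m, by have := j.isLt; omega⟩
          else (j₀, (y ⟨(m : ℕ) - 1, by have := m.isLt; omega⟩).2))| :=
          Finset.abs_sum_le_sum_abs _ _
      _ ≤ ∑ _j : Fin (k+1), supNorm f := by
          refine Finset.sum_le_sum fun j _ => ?_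
          rw [abs_mul, abs_pow, abs_neg, abs_one, one_pow, one_mul]
          simp only [supNorm]
          exact le_ciSup hr1 _

      _ = (k+1) * supNorm f := by
          rw [Finset.sum_const, Finset.card_univ, Fintype.card_fin, nsmul_eq_mul]
          push_cast
          ring
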